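/- For c ∈ ℂ^{ℤ_d×ℤ_d}, the matrix Tc is Hermitian if and only if the symbols of c satisfy conj(p_j(z)) = p_{−j}(ω^j z) for every j ∈ ℤ_d and every complex z with z^d = 1. -/

import Mathlib

open Matrix Complex

/-- `ω = exp(2πi/d)`, a primitive `d`-th root of unity. -/
noncomputable def omegaRoot (d : ℕ) : ℂ := Complex.exp (2 * Real.pi * Complex.I / d)

/-- The cyclic shift matrix `S`, `S_{jk} = δ_{j,k+1}`. -/
def Smat (d : ℕ) [NeZero d] : Matrix (ZMod d) (ZMod d) ℂ :=
  Matrix.of fun j k => if j = k + 1 then 1 else 0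

/-- The modulation matrix `Ω`, `Ω_{jk} = ω^j δ_{jk}`. -/
noncomputable def Omat (d : ℕ) [NeZero d] : Matrix (ZMod d) (ZMod d) ℂ :=
  Matrix.of fun j k => if j = k then omegaRoot d ^ j.val else 0

/-- The reconstruction operator `T`, `Tc = (1/d) Σ_{j,k} c_{jk} (S^j Ω^k)^*`. -/
noncomputable def Trec (d : ℕ) [NeZero d] (c : Matrix (ZMod d) (ZMod d) ℂ) :
    Matrix (ZMod d) (ZMod d) ℂ :=
  (1 / (d : ℂ)) • ∑ j : ZMod d, ∑ k : ZMod d, c j k • (Smat d ^ j.val * Omat d ^ k.val)ᴴ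

/-- The `j`-th symbol of `c`: `p_j(z) = Σ_r c_{-j,r} (ω^j z)^{-r}`. -/
noncomputable def symb (d : ℕ) [NeZero d] (c : Matrix (ZMod d) (ZMod d) ℂ)
    (j : ZMod d) (z : ℂ) : ℂ :=
  ∑ r : ZMod d, c (-j) r * (omegaRoot d ^ j.val * z) ^ (-(r.val : ℤ))

lemma omega_prim (d : ℕ) [NeZero d] : IsPrimitiveRoot (omegaRoot d) d :=
  Complex.isPrimitiveRoot_exp d (NeZero.ne d)

lemma omega_ne_zero (d : ℕ) : omegaRoot d ≠ 0 := Complex.exp_ne_zero _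

noncomputable def chiF (d : ℕ) [NeZero d] (x : ZMod d) : ℂ := omegaRoot d ^ x.val

lemma omega_zpow_congr (d : ℕ) [NeZero d] {n m : ℤ} (h : (n : ZMod d) = m) :
    omegaRoot d ^ n = omegaRoot d ^ m := by
  have hdvd : (d : ℤ) ∣ n - m := (ZMod.intCast_eq_intCast_iff _ _ _).1 h |>.symm.dvd
  obtain ⟨t, ht⟩ := hdvd
  have hn : n = m + d * t := by linarith
  rw [hn, zpow_add₀ (omega_ne_zero d), _root_.zpow_mul, zpow_natCast,
    (omega_prim d).pow_eq_one, _root_.one_zpow, mul_one]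

lemma chi_int (d : ℕ) [NeZero d] (n : ℤ) : omegaRoot d ^ n = chiF d (n : ZMod d) := by
  rw [chiF, ← zpow_natCast]
  apply omega_zpow_congr
  push_cast [ZMod.natCast_val, ZMod.cast_id]
  rfl

lemma chi_nat (d : ℕ) [NeZero d] (n : ℕ) : omegaRoot d ^ n = chiF d (n : ZMod d) := by
  rw [← zpow_natCast, chi_int]; push_cast; rfl

lemma chi_add (d : ℕ) [NeZero d] (x y : ZMod d) :
    chiF d (x + y) = chiF d x * chiF d y := by
  rw [show chiF d x * chiF d y = omegaRoot d ^ (x.val + y.val) by rw [pow_add]; rfl, chi_nat]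
  congr 1
  push_cast [ZMod.natCast_val, ZMod.cast_id]
  rfl

lemma norm_omega (d : ℕ) [NeZero d] : ‖omegaRoot d‖ = 1 := by
  rw [omegaRoot, Complex.norm_exp]
  have : (2 * (Real.pi : ℂ) * Complex.I / d).re = 0 := by
    simp [Complex.div_re]
  rw [this, Real.exp_zero]

lemma conj_chi (d : ℕ) [NeZero d] (x : ZMod d) :
    (starRingEnd ℂ) (chiF d x) = chiF d (-x) := by
  have hinv : (starRingEnd ℂ) (omegaRoot d) = (omegaRoot d)⁻¹ :=
    (Complex.inv_eq_conj (norm_omega d)).symm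
  rw [chiF, map_pow, hinv, inv_pow, ← zpow_natCast, ← _root_.zpow_neg, chi_int]
  push_cast [ZMod.natCast_val, ZMod.cast_id]
  rfl

lemma chi_pow_d (d : ℕ) [NeZero d] (x : ZMod d) : chiF d x ^ d = 1 := by
  rw [chiF, ← pow_mul, mul_comm, pow_mul, (omega_prim d).pow_eq_one, one_pow]

lemma exists_chi (d : ℕ) [NeZero d] {z : ℂ} (hz : z ^ d = 1) :
    ∃ a : ZMod d, chiF d a = z := by
  obtain ⟨i, hi, hiz⟩ := (omega_prim d).eq_pow_of_pow_eq_one hz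
  exact ⟨(i : ZMod d), by rw [chiF, ZMod.val_natCast_of_lt hi, hiz]⟩

lemma Smat_pow (d : ℕ) [NeZero d] (n : ℕ) (a b : ZMod d) :
    (Smat d ^ n) a b = if a = b + (n : ZMod d) then 1 else 0 := by
  induction n generalizing a b with
  | zero => simp [Matrix.one_apply, eq_comm]
  | succ n ih =>
    rw [pow_succ, Matrix.mul_apply, Finset.sum_eq_single (b + 1)]
    · rw [ih]
      simp only [Smat, Matrix.of_apply, if_pos rfl, mul_one]
      have : b + 1 + (n : ZMod d) = b + ((n : ℕ) + 1 : ℕ) := by push_cast; ring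
      rw [this]
      simp
    · intro x _ hx
      simp [Smat, hx]
    · simp

lemma Omat_pow (d : ℕ) [NeZero d] (n : ℕ) (a b : ZMod d) :
    (Omat d ^ n) a b = if a = b then omegaRoot d ^ (a.val * n) else 0 := by
  induction n generalizing a b with
  | zero => simp [Matrix.one_apply]
  | succ n ih =>
    rw [pow_succ, Matrix.mul_apply, Finset.sum_eq_single b]
    · rw [ih]
      simp only [Omat, Matrix.of_apply, if_pos rfl]
      by_cases h : a = b
      · subst h; simp [pow_succ, Nat.mul_succ, pow_add]
      · simp [h]
    · intro x _ hx
      simp [Omat, hx]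
    · simp

lemma SO_apply (d : ℕ) [NeZero d] (j k x y : ZMod d) :
    (Smat d ^ j.val * Omat d ^ k.val) x y =
      if x = y + j then chiF d (y * k) else 0 := by
  rw [Matrix.mul_apply, Finset.sum_eq_single y]
  · rw [Smat_pow, Omat_pow, if_pos rfl]
    have h1 : ((j.val : ℕ) : ZMod d) = j := by
      simp [ZMod.natCast_val, ZMod.cast_id]
    have h2 : omegaRoot d ^ (y.val * k.val) = chiF d (y * k) := by
      rw [chi_nat]; push_cast [ZMod.natCast_val, ZMod.cast_id]; rfl
    rw [h1, h2, ite_mul, one_mul, zero_mul]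
  · intro x' _ hx
    rw [Omat_pow, if_neg hx, mul_zero]
  · simp

lemma Trec_apply (d : ℕ) [NeZero d] (c : Matrix (ZMod d) (ZMod d) ℂ) (a b : ZMod d) :
    Trec d c a b = (1 / (d : ℂ)) * ∑ k : ZMod d, c (b - a) k * chiF d (-(a * k)) := by
  rw [Trec]
  simp only [Matrix.smul_apply, Matrix.sum_apply, Matrix.conjTranspose_apply,
    Matrix.smul_apply, SO_apply, smul_eq_mul]
  congr 1
  rw [Finset.sum_eq_single (b - a)]
  · have hb : b = a + (b - a) := by ring
    refine Finset.sum_congr rfl fun k _ => ?_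
    rw [if_pos hb, Complex.star_def, conj_chi]
  · intro x _ hx
    have hcond : ¬ (b = a + x) := by
      intro h; apply hx; rw [h]; ring
    simp [hcond]
  · simp

lemma omega_mul_chi (d : ℕ) [NeZero d] (j a : ZMod d) :
    omegaRoot d ^ j.val * chiF d a = chiF d (j + a) := by
  rw [chi_add]; rfl

lemma symb_eval (d : ℕ) [NeZero d] (c : Matrix (ZMod d) (ZMod d) ℂ) (j a : ZMod d) :
    symb d c j (chiF d a) = ∑ r : ZMod d, c (-j) r * chiF d (-((j + a) * r)) := by
  unfold symb
  refine Finset.sum_congr rfl fun r _ => ?_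
  congr 1
  rw [omega_mul_chi, chiF, ← zpow_natCast, ← _root_.zpow_mul, chi_int]
  congr 1
  push_cast [ZMod.natCast_val, ZMod.cast_id]
  ring

lemma symb_cond_iff (d : ℕ) [NeZero d] (c : Matrix (ZMod d) (ZMod d) ℂ) (j a : ZMod d) :
    ((starRingEnd ℂ) (symb d c j (chiF d a)) =
        symb d c (-j) (omegaRoot d ^ j.val * chiF d a)) ↔
    (∑ k : ZMod d, (starRingEnd ℂ) (c (-j) k) * chiF d ((j + a) * k) =
        ∑ k : ZMod d, c j k * chiF d (-(a * k))) := by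
  rw [omega_mul_chi, symb_eval, symb_eval, map_sum]
  simp only [_root_.map_mul, conj_chi, neg_neg, neg_add_cancel_left]

lemma herm_entry_iff (d : ℕ) [NeZero d] (c : Matrix (ZMod d) (ZMod d) ℂ) (a b : ZMod d) :
    (star (Trec d c b a) = Trec d c a b) ↔
    (∑ k : ZMod d, (starRingEnd ℂ) (c (a - b) k) * chiF d (b * k) =
        ∑ k : ZMod d, c (b - a) k * chiF d (-(a * k))) := by
  rw [Trec_apply, Trec_apply, Complex.star_def, _root_.map_mul, map_sum]
  have h1 : (starRingEnd ℂ) (1 / (d : ℂ)) = 1 / (d : ℂ) := by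
    rw [map_div₀, _root_.map_one, map_natCast]
  rw [h1, mul_right_inj' (one_div_ne_zero (Nat.cast_ne_zero.mpr (NeZero.ne d)))]
  simp only [_root_.map_mul, conj_chi, neg_neg]

theorem stmt18 (d : ℕ) [NeZero d] (hd : 2 ≤ d) (c : Matrix (ZMod d) (ZMod d) ℂ) :
    (Trec d c).IsHermitian ↔
    ∀ j : ZMod d, ∀ z : ℂ, z ^ d = 1 →
      (starRingEnd ℂ) (symb d c j z) = symb d c (-j) (omegaRoot d ^ j.val * z) := by
  constructor
  · intro h j z hz
    obtain ⟨a, rfl⟩ := exists_chi d hz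
    rw [symb_cond_iff]
    have he := congrFun (congrFun h a) (a + j)
    rw [Matrix.conjTranspose_apply] at he
    rw [herm_entry_iff] at he
    rw [sub_add_cancel_left, add_sub_cancel_left, add_comm a j] at he
    exact he
  · intro h
    show (Trec d c)ᴴ = Trec d c
    ext a b
    rw [Matrix.conjTranspose_apply, herm_entry_iff]
    have hs := (symb_cond_iff d c (b - a) a).mp (h (b - a) (chiF d a) (chi_pow_d d a))
    rw [sub_add_cancel, neg_sub] at hs
    exact hs
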